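/- As n → ∞, the quotient (∑_{1 ≤ i ≤ n} X_{2i}) / X_{2n} tends to γ = (3 - β₁ + 2β₁²)/5, and moreover each such quotient is strictly less than γ. -/

import Mathlib

def X : ℕ → ℕ
  | 0 => 0
  | 1 => 1
  | 2 => 2
  | 3 => 4
  | 4 => 7
  | (n+5) => X (n+4) + X (n+3) + X (n+1)

lemma Xd (n : ℕ) : X (n+5) = X (n+4) + X (n+3) + X (n+1) := rfl

lemma Xmono (m : ℕ) : X m ≤ X (m+1) := by
  match m with
  | 0 => decide
  | 1 => decide
  | 2 => decide
  | 3 => decide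
  | (k+4) =>
    show X (k+4) ≤ X (k+5)
    have := Xd k
    omega

lemma Xrec6 : ∀ m : ℕ, X (m+8) = 2 * X (m+6) + 3 * X (m+4) + X (m+2) := by
  have key : ∀ m : ℕ, (X (m+8) = 2 * X (m+6) + 3 * X (m+4) + X (m+2)) ∧
      (X (m+9) = 2 * X (m+7) + 3 * X (m+5) + X (m+3)) ∧
      (X (m+10) = 2 * X (m+8) + 3 * X (m+6) + X (m+4)) ∧
      (X (m+11) = 2 * X (m+9) + 3 * X (m+7) + X (m+5)) ∧
      (X (m+12) = 2 * X (m+10) + 3 * X (m+8) + X (m+6)) := by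
    intro m
    induction m with
    | zero => refine ⟨?_, ?_, ?_, ?_, ?_⟩ <;> decide
    | succ n ih =>
      obtain ⟨p0, p1, p2, p3, p4⟩ := ih
      refine ⟨p1, p2, p3, p4, ?_⟩
      show X (n+13) = 2 * X (n+11) + 3 * X (n+9) + X (n+7)
      have q0 : X (n+8) = 2 * X (n+6) + 3 * X (n+4) + X (n+2) := p0
      have q1 : X (n+9) = 2 * X (n+7) + 3 * X (n+5) + X (n+3) := p1
      have q2 : X (n+10) = 2 * X (n+8) + 3 * X (n+6) + X (n+4) := p2
      have q3 : X (n+11) = 2 * X (n+9) + 3 * X (n+7) + X (n+5) := p3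
      have q4 : X (n+12) = 2 * X (n+10) + 3 * X (n+8) + X (n+6) := p4
      have d5 : X (n+5) = X (n+4) + X (n+3) + X (n+1) := Xd n
      have d6 : X (n+6) = X (n+5) + X (n+4) + X (n+2) := Xd (n+1)
      have d7 : X (n+7) = X (n+6) + X (n+5) + X (n+3) := Xd (n+2)
      have d8 : X (n+8) = X (n+7) + X (n+6) + X (n+4) := Xd (n+3)
      have d9 : X (n+9) = X (n+8) + X (n+7) + X (n+5) := Xd (n+4)
      have d10 : X (n+10) = X (n+9) + X (n+8) + X (n+6) := Xd (n+5)
      have d11 : X (n+11) = X (n+10) + X (n+9) + X (n+7) := Xd (n+6)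
      have d12 : X (n+12) = X (n+11) + X (n+10) + X (n+8) := Xd (n+7)
      have d13 : X (n+13) = X (n+12) + X (n+11) + X (n+9) := Xd (n+8)
      omega
  exact fun m => (key m).1

lemma Xstep (k : ℕ) : 2 * X (2*k+4) ≤ X (2*k+6) := by
  have h3 : X (2*k+6) = X (2*k+5) + X (2*k+4) + X (2*k+2) := Xd (2*k+1)
  have h4 : X (2*k+4) ≤ X (2*k+5) := Xmono (2*k+4)
  omega

lemma Xpow : ∀ n : ℕ, 1 ≤ n → 2^n ≤ X (2*n) := by
  intro n hn
  induction n, hn using Nat.le_induction with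
  | base => decide
  | succ m hm ih =>
    match m, hm, ih with
    | 1, _, _ => decide
    | (k+2), _, ih =>
      have h1 : 2^(k+2) ≤ X (2*k+4) := by
        have := ih
        rwa [show 2*(k+2) = 2*k+4 from by ring] at this
      have h2 := Xstep k
      have e2 : (2:ℕ)*(k+2+1) = 2*k+6 := by ring
      rw [e2]
      have e3 : (2:ℕ)^(k+2+1) = 2^(k+2) + 2^(k+2) := by ring
      omega

lemma Ssum : ∀ m : ℕ, 5 * (∑ i ∈ Finset.Icc 1 (m+1), X (2*i)) + X (2*m+4) + 6
    = X (2*m+6) + X (2*m+2) := by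
  intro m
  induction m with
  | zero => simp [Finset.Icc_self]; decide
  | succ k ih =>
    rw [Finset.sum_Icc_succ_top (by omega : 1 ≤ k+1+1)]
    have e1 : (2:ℕ)*(k+1+1) = 2*k+4 := by ring
    have e2 : (2:ℕ)*(k+1)+4 = 2*k+6 := by ring
    have e3 : (2:ℕ)*(k+1)+6 = 2*k+8 := by ring
    have e4 : (2:ℕ)*(k+1)+2 = 2*k+4 := by ring
    rw [e1, e2, e3, e4]
    have h6 := Xrec6 (2*k)
    omega

noncomputable def Dseq (b : ℝ) (n : ℕ) : ℝ :=
  (2 - b + 2*b^2) * (X (2*n) : ℝ) + (X (2*n+2) : ℝ) - (X (2*n+4) : ℝ)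

noncomputable def Vseq (b : ℝ) (n : ℕ) : ℝ :=
  b^2 * (Dseq b (n+1))^2 + (b^2 - b + 2) * Dseq b (n+1) * Dseq b n + (Dseq b n)^2

section
variable {b : ℝ} (hroot : b^3 - 2*b^2 + b - 1 = 0)
include hroot

lemma hblo : 7/4 < b := by
  have h1 : (b-7/4)*(b^2-b/4+9/16) = 1/64 := by linear_combination hroot
  nlinarith [sq_nonneg (b-1/8)]

lemma hbhi : b < 9/5 := by
  have h1 : (b-9/5)*(b^2-b/5+16/25) = -19/125 := by linear_combination hroot
  nlinarith [sq_nonneg (b-1/10)]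

lemma Drec (n : ℕ) :
    b^2 * Dseq b (n+3) + (b^2-b+2) * Dseq b (n+2) + Dseq b (n+1) = 0 := by
  have r1 : ((X (2*n+8) : ℝ)) = 2 * (X (2*n+6) : ℝ) + 3 * (X (2*n+4) : ℝ) + (X (2*n+2) : ℝ) := by
    exact_mod_cast Xrec6 (2*n)
  have r2 : ((X (2*n+10) : ℝ)) = 2 * (X (2*n+8) : ℝ) + 3 * (X (2*n+6) : ℝ) + (X (2*n+4) : ℝ) := by
    exact_mod_cast Xrec6 (2*n+2)
  simp only [Dseq, Nat.mul_add, Nat.mul_one, Nat.add_assoc, Nat.reduceAdd, Nat.reduceMul]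
  linear_combination (-(b^2)) * r2 + (b-2-2*b^2) * r1 +
    ((2*b+3)*(X (2*n+6):ℝ) + (2*b+1)*(X (2*n+4):ℝ)) * hroot

lemma Vrec (n : ℕ) : b^2 * Vseq b (n+2) = Vseq b (n+1) := by
  have h := Drec hroot n
  simp only [Vseq, Nat.add_assoc, Nat.reduceAdd]
  linear_combination (b^2 * Dseq b (n+3) - Dseq b (n+1)) * h

lemma V1val : Vseq b 1 = 7*b^2 - 11*b - 2 := by
  have x2 : ((X 2 : ℕ) : ℝ) = 2 := by norm_num [X]
  have x4 : ((X 4 : ℕ) : ℝ) = 7 := by norm_num [X]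
  have x6 : ((X 6 : ℕ) : ℝ) = 21 := by norm_num [show X 6 = 21 from rfl]
  have x8 : ((X 8 : ℕ) : ℝ) = 65 := by norm_num [show X 8 = 65 from rfl]
  simp only [Vseq, Dseq, Nat.reduceMul, Nat.reduceAdd, x2, x4, x6, x8]
  linear_combination (252*b^3+196*b^2-713*b-702) * hroot
end

section
variable {b : ℝ} (hroot : b^3 - 2*b^2 + b - 1 = 0)
include hroot

lemma Vbounds : ∀ n : ℕ, 1 ≤ n → 0 ≤ Vseq b n ∧ Vseq b n ≤ Vseq b 1 := by
  intro n hn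
  have hlo := hblo hroot
  induction n, hn using Nat.le_induction with
  | base =>
    refine ⟨?_, le_refl _⟩
    rw [V1val hroot]
    nlinarith
  | succ m hm ih =>
    obtain ⟨h0, h1⟩ := ih
    obtain ⟨k, rfl⟩ : ∃ k, m = k + 1 := ⟨m - 1, by omega⟩
    have hv := Vrec hroot k
    have hb2 : (0:ℝ) < b^2 := by positivity
    have hk2 : 0 ≤ Vseq b (k+2) := by nlinarith [mul_pos hb2 hb2]
    refine ⟨hk2, ?_⟩
    show Vseq b (k+2) ≤ Vseq b 1
    nlinarith [hk2, hb2]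

lemma Dbound : ∀ n : ℕ, 1 ≤ n → (Dseq b n)^2 < 36 := by
  intro n hn
  have hlo := hblo hroot
  have hhi := hbhi hroot
  have key : 4*b^2*Vseq b n
      = (2*b^2*Dseq b (n+1) + (b^2-b+2)*Dseq b n)^2 + (3*b-4)*(Dseq b n)^2 := by
    simp only [Vseq]
    linear_combination (-(b*(Dseq b n)^2)) * hroot
  obtain ⟨h0, h1⟩ := Vbounds hroot n hn
  rw [V1val hroot] at h1
  nlinarith [sq_nonneg (2*b^2*Dseq b (n+1) + (b^2-b+2)*Dseq b n)]
end

theorem stmt8 (β₁ : ℝ)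
    (hroot : β₁^3 - 2*β₁^2 + β₁ - 1 = 0)
    (huniq : ∀ x : ℝ, x^3 - 2*x^2 + x - 1 = 0 → x = β₁) :
    Filter.Tendsto
      (fun n : ℕ => (∑ i ∈ Finset.Icc 1 n, (X (2*i) : ℝ)) / (X (2*n) : ℝ))
      Filter.atTop (nhds ((3 - β₁ + 2*β₁^2) / 5)) ∧
    ∀ n : ℕ, 1 ≤ n →
      (∑ i ∈ Finset.Icc 1 n, (X (2*i) : ℝ)) / (X (2*n) : ℝ)
        < (3 - β₁ + 2*β₁^2) / 5 := by
  have hlo := hblo hroot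
  have hXge : ∀ n : ℕ, 1 ≤ n → (2:ℝ)^n ≤ (X (2*n) : ℝ) := by
    intro n hn
    exact_mod_cast Nat.cast_le.mpr (Xpow n hn)
  have hXpos : ∀ n : ℕ, 1 ≤ n → (0:ℝ) < (X (2*n) : ℝ) := by
    intro n hn
    have := hXge n hn
    have h2 : (0:ℝ) < 2^n := by positivity
    linarith
  have hgap : ∀ n : ℕ, 1 ≤ n →
      (3 - β₁ + 2*β₁^2)/5 - (∑ i ∈ Finset.Icc 1 n, (X (2*i) : ℝ)) / (X (2*n) : ℝ)
      = (6 + Dseq β₁ n) / (5 * (X (2*n) : ℝ)) := by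
    intro n hn
    obtain ⟨m, rfl⟩ : ∃ m, n = m+1 := ⟨n-1, by omega⟩
    have hs : 5 * (∑ i ∈ Finset.Icc 1 (m+1), (X (2*i) : ℝ)) + (X (2*m+4) : ℝ) + 6
        = (X (2*m+6) : ℝ) + (X (2*m+2) : ℝ) := by exact_mod_cast Ssum m
    have hx := hXpos (m+1) (by omega)
    have hxne : ((X (2*(m+1)) : ℝ)) ≠ 0 := ne_of_gt hx
    simp only [Dseq, Nat.mul_add, Nat.mul_one, Nat.add_assoc, Nat.reduceAdd] at *
    field_simp
    ring_nf
    ring_nf at hs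
    linarith [hs]
  have hDb : ∀ n : ℕ, 1 ≤ n → -6 < Dseq β₁ n ∧ Dseq β₁ n < 6 := by
    intro n hn
    have h := Dbound hroot n hn
    constructor
    · nlinarith [sq_nonneg (Dseq β₁ n + 6)]
    · nlinarith [sq_nonneg (Dseq β₁ n - 6)]
  have hpos : ∀ n : ℕ, 1 ≤ n →
      0 < (6 + Dseq β₁ n) / (5 * (X (2*n) : ℝ)) := by
    intro n hn
    have h1 := (hDb n hn).1
    have h2 := hXpos n hn
    apply div_pos <;> linarith
  constructor
  · have hlim : Filter.Tendsto (fun n : ℕ => (12:ℝ)/(5*2^n)) Filter.atTop (nhds 0) := by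
      have he : (fun n : ℕ => (12:ℝ)/(5*2^n)) = fun n : ℕ => (12/5) * (1/2:ℝ)^n := by
        funext n
        rw [div_pow, one_pow]
        field_simp
      rw [he]
      simpa using (tendsto_pow_atTop_nhds_zero_of_lt_one (by norm_num : (0:ℝ) ≤ 1/2)
        (by norm_num : (1/2:ℝ) < 1)).const_mul (12/5 : ℝ)
    have hsq : Filter.Tendsto
        (fun n : ℕ => (3 - β₁ + 2*β₁^2)/5
          - (∑ i ∈ Finset.Icc 1 n, (X (2*i) : ℝ)) / (X (2*n) : ℝ))
        Filter.atTop (nhds 0) := by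
      apply squeeze_zero' ?_ ?_ hlim
      · filter_upwards [Filter.eventually_ge_atTop 1] with n hn
        rw [hgap n hn]
        exact le_of_lt (hpos n hn)
      · filter_upwards [Filter.eventually_ge_atTop 1] with n hn
        rw [hgap n hn]
        have h1 := (hDb n hn).2
        have h2 := hXge n hn
        have h3 : (0:ℝ) < 2^n := by positivity
        apply div_le_div₀ (by norm_num) (by linarith) (by linarith)
        linarith
    have := hsq.const_sub ((3 - β₁ + 2*β₁^2)/5)
    simp only [sub_sub_cancel, sub_zero] at this
    exact this
  · intro n hn
    have h := hgap n hn
    have h2 := hpos n hn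
    linarith
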